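/- arXiv:1611.08560 — 2 statements merged into one kernel-verified Lean document; each statement's English description precedes it below -/
import Mathlib

section
/- As r → 0⁺, ∫₀^{2r} S(u/2, r) · 2πu·e^{−πu²} du ∼ (1/2)·π²·r⁴, i.e., the ratio of the integral to (1/2)π²r⁴ tends to 1. -/
open MeasureTheory Real Filter

/-- The disk-segment area `S(v,r) = r²·arccos(v/r) − v·√(r² − v²)`. -/
noncomputable def S (v r : ℝ) : ℝ := r ^ 2 * Real.arccos (v / r) - v * Real.sqrt (r ^ 2 - v ^ 2)

noncomputable def Gfun (t : ℝ) : ℝ :=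
  t ^ 2 / 2 * Real.arccos t + 1 / 8 * Real.arcsin t
    - 1 / 8 * (t + 2 * t ^ 3) * Real.sqrt (1 - t ^ 2)

lemma Gfun_continuous : Continuous Gfun := by
  unfold Gfun
  continuity

lemma Gfun_hasDerivAt {t : ℝ} (h0 : 0 < t) (h1 : t < 1) :
    HasDerivAt Gfun (t * (Real.arccos t - t * Real.sqrt (1 - t ^ 2))) t := by
  have hne1 : t ≠ -1 := by linarith
  have hne1' : t ≠ 1 := by linarith
  have hpos : 0 < 1 - t ^ 2 := by nlinarith
  have hs0 : 0 < Real.sqrt (1 - t ^ 2) := Real.sqrt_pos.2 hpos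
  set s := Real.sqrt (1 - t ^ 2) with hs
  have hs2 : s ^ 2 = 1 - t ^ 2 := Real.sq_sqrt hpos.le
  have dbase : HasDerivAt (fun y : ℝ => 1 - y ^ 2) (-(2 * t)) t := by
    simpa using (hasDerivAt_pow 2 t).const_sub 1
  have dsq : HasDerivAt (fun y : ℝ => Real.sqrt (1 - y ^ 2)) (-t / s) t := by
    have := (Real.hasDerivAt_sqrt (ne_of_gt hpos)).comp t dbase
    refine this.congr_deriv ?_
    rw [← hs]
    field_simp
  have dA : HasDerivAt (fun y : ℝ => y ^ 2 / 2 * Real.arccos y)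
      ((2 * t / 2) * Real.arccos t + t ^ 2 / 2 * (-(1 / s))) t := by
    have := ((hasDerivAt_pow 2 t).div_const 2).mul (Real.hasDerivAt_arccos hne1 hne1')
    refine this.congr_deriv ?_
    rw [hs]; norm_num
  have dB : HasDerivAt (fun y : ℝ => 1 / 8 * Real.arcsin y) (1 / 8 * (1 / s)) t := by
    have := (Real.hasDerivAt_arcsin hne1 hne1').const_mul (1/8 : ℝ)
    simpa [hs] using this
  have dC0 : HasDerivAt (fun y : ℝ => y + 2 * y ^ 3) (1 + 2 * (3 * t ^ 2)) t := by
    have := (hasDerivAt_id t).add ((hasDerivAt_pow 3 t).const_mul 2)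
    refine this.congr_deriv ?_
    norm_num
  have dC : HasDerivAt (fun y : ℝ => 1 / 8 * (y + 2 * y ^ 3) * Real.sqrt (1 - y ^ 2))
      ((1 / 8 * (1 + 2 * (3 * t ^ 2))) * s + (1 / 8 * (t + 2 * t ^ 3)) * (-t / s)) t := by
    have := (dC0.const_mul (1/8 : ℝ)).mul dsq
    exact this
  have := (dA.add dB).sub dC
  refine this.congr_deriv ?_
  have hsne : s ≠ 0 := ne_of_gt hs0
  field_simp
  ring_nf
  linear_combination ((256 * t ^ 2 - 128) * (s ^ 2 + 1 - t ^ 2) + 256 * t ^ 4 - 380 * t ^ 2 + 126 + s ^ 2 * (128 - 256 * t ^ 2)) * hs2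

lemma sqrt_fact {r u : ℝ} (hr : 0 < r) :
    Real.sqrt (r ^ 2 - (u / 2) ^ 2) = r * Real.sqrt (1 - (u / (2 * r)) ^ 2) := by
  have h : r ^ 2 - (u / 2) ^ 2 = r ^ 2 * (1 - (u / (2 * r)) ^ 2) := by
    field_simp
  rw [h, Real.sqrt_mul (sq_nonneg r), Real.sqrt_sq hr.le]

lemma S_eq {r u : ℝ} (hr : 0 < r) :
    S (u / 2) r = r ^ 2 *
      (Real.arccos (u / (2 * r)) - (u / (2 * r)) * Real.sqrt (1 - (u / (2 * r)) ^ 2)) := by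
  unfold S
  rw [sqrt_fact hr]
  have : u / 2 / r = u / (2 * r) := by ring
  rw [this]
  field_simp

lemma S_cont (r : ℝ) : Continuous (fun u : ℝ => S (u / 2) r) := by
  unfold S
  continuity

lemma S_nonneg {r u : ℝ} (hr : 0 < r) (hu : 0 ≤ u) (hur : u ≤ 2 * r) :
    0 ≤ S (u / 2) r := by
  rw [S_eq hr]
  set t := u / (2 * r) with ht
  have ht0 : 0 ≤ t := by positivity
  have ht1 : t ≤ 1 := by
    rw [ht, div_le_one (by positivity)]; linarith
  have hB : Real.sqrt (1 - t ^ 2) ≤ Real.arccos t := by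
    rw [← Real.sin_arccos]
    exact Real.sin_le (Real.arccos_nonneg t)
  have htB : t * Real.sqrt (1 - t ^ 2) ≤ Real.sqrt (1 - t ^ 2) := by
    nlinarith [Real.sqrt_nonneg (1 - t ^ 2)]
  nlinarith [sq_nonneg r]

lemma J_eq {r : ℝ} (hr : 0 < r) :
    ∫ u in (0:ℝ)..(2 * r), S (u / 2) r * (2 * π * u) = 1 / 2 * π ^ 2 * r ^ 4 := by
  have hab : (0:ℝ) ≤ 2 * r := by positivity
  have hcont : ContinuousOn (fun u : ℝ => 8 * π * r ^ 4 * Gfun (u / (2 * r)))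
      (Set.Icc 0 (2 * r)) :=
    (continuous_const.mul (Gfun_continuous.comp (continuous_id.div_const _))).continuousOn
  have hderiv : ∀ u ∈ Set.Ioo (0:ℝ) (2 * r),
      HasDerivWithinAt (fun u : ℝ => 8 * π * r ^ 4 * Gfun (u / (2 * r)))
        (S (u / 2) r * (2 * π * u)) (Set.Ioi u) u := by
    intro u hu
    have ht0 : 0 < u / (2 * r) := div_pos hu.1 (by positivity)
    have ht1 : u / (2 * r) < 1 := by
      rw [div_lt_one (by positivity)]; exact hu.2
    have h1 : HasDerivAt (fun u : ℝ => u / (2 * r)) (1 / (2 * r)) u := by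
      simpa using (hasDerivAt_id u).div_const (2 * r)
    have h2 := ((Gfun_hasDerivAt ht0 ht1).const_mul (8 * π * r ^ 4)).comp u h1
    have h3 : S (u / 2) r * (2 * π * u) =
        8 * π * r ^ 4 *
          (u / (2 * r) * (Real.arccos (u / (2 * r)) -
            u / (2 * r) * Real.sqrt (1 - (u / (2 * r)) ^ 2))) * (1 / (2 * r)) := by
      rw [S_eq hr]
      field_simp
      ring
    rw [h3]
    exact h2.hasDerivWithinAt
  have hint : IntervalIntegrable (fun u : ℝ => S (u / 2) r * (2 * π * u)) volume 0 (2 * r) :=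
    ((S_cont r).mul (by fun_prop)).intervalIntegrable _ _
  rw [intervalIntegral.integral_eq_sub_of_hasDeriv_right_of_le hab hcont hderiv hint]
  have h2r : (2 * r) / (2 * r) = 1 := div_self (by positivity)
  rw [h2r]
  have hG1 : Gfun 1 = π / 16 := by
    unfold Gfun
    simp [Real.arccos_one, Real.arcsin_one]
    ring
  have hG0 : Gfun (0 / (2 * r)) = 0 := by
    rw [zero_div]
    unfold Gfun
    simp
  rw [hG1, hG0]
  ring

/-- As `r → 0⁺`, `∫₀^{2r} S(u/2, r)·2πu·e^(−πu²) du ∼ (1/2)·π²·r⁴`, i.e., the ratio of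
the integral to `(1/2)π²r⁴` tends to `1`. -/
theorem stmt_6 :
    Tendsto
      (fun r : ℝ =>
        (∫ u in (0 : ℝ)..(2 * r), S (u / 2) r * (2 * π * u * Real.exp (-π * u ^ 2))) /
          ((1 / 2) * π ^ 2 * r ^ 4))
      (nhdsWithin 0 (Set.Ioi 0)) (nhds 1) := by
  have hlow : Tendsto (fun r : ℝ => Real.exp (-(4 * π * r ^ 2)))
      (nhdsWithin 0 (Set.Ioi 0)) (nhds 1) := by
    have : Tendsto (fun r : ℝ => Real.exp (-(4 * π * r ^ 2))) (nhds 0) (nhds 1) := by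
      have h := (Real.continuous_exp.comp (by fun_prop :
        Continuous fun r : ℝ => -(4 * π * r ^ 2))).tendsto 0
      simpa [Function.comp_def] using h
    exact this.mono_left nhdsWithin_le_nhds
  refine tendsto_of_tendsto_of_tendsto_of_le_of_le' hlow tendsto_const_nhds ?_ ?_
  · -- lower bound eventually
    filter_upwards [self_mem_nhdsWithin] with r hr
    simp only [Set.mem_Ioi] at hr
    have hD : (0:ℝ) < 1 / 2 * π ^ 2 * r ^ 4 := by positivity
    have hJint : IntervalIntegrable (fun u : ℝ => S (u / 2) r * (2 * π * u)) volume 0 (2 * r) :=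
      ((S_cont r).mul (by fun_prop)).intervalIntegrable _ _
    have hIint : IntervalIntegrable
        (fun u : ℝ => S (u / 2) r * (2 * π * u * Real.exp (-π * u ^ 2))) volume 0 (2 * r) :=
      ((S_cont r).mul (by fun_prop)).intervalIntegrable _ _
    have hmono : Real.exp (-(4 * π * r ^ 2)) * (1 / 2 * π ^ 2 * r ^ 4) ≤
        ∫ u in (0:ℝ)..(2 * r), S (u / 2) r * (2 * π * u * Real.exp (-π * u ^ 2)) := by
      calc Real.exp (-(4 * π * r ^ 2)) * (1 / 2 * π ^ 2 * r ^ 4)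
          = ∫ u in (0:ℝ)..(2 * r),
              Real.exp (-(4 * π * r ^ 2)) * (S (u / 2) r * (2 * π * u)) := by
            rw [intervalIntegral.integral_const_mul, J_eq hr]
        _ ≤ _ := by
            apply intervalIntegral.integral_mono_on (by positivity)
              (hJint.const_mul _) hIint
            intro u hu
            obtain ⟨hu0, hu2⟩ := hu
            have hS : 0 ≤ S (u / 2) r := S_nonneg hr hu0 hu2
            have hexp : Real.exp (-(4 * π * r ^ 2)) ≤ Real.exp (-π * u ^ 2) := by
              apply Real.exp_le_exp.2
              have hu4 : u ^ 2 ≤ 4 * r ^ 2 := by nlinarith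
              have := mul_le_mul_of_nonneg_left hu4 Real.pi_pos.le
              linarith
            have hu' : 0 ≤ 2 * π * u := by positivity
            calc Real.exp (-(4 * π * r ^ 2)) * (S (u / 2) r * (2 * π * u))
                ≤ Real.exp (-π * u ^ 2) * (S (u / 2) r * (2 * π * u)) := by
                  apply mul_le_mul_of_nonneg_right hexp (by positivity)
              _ = S (u / 2) r * (2 * π * u * Real.exp (-π * u ^ 2)) := by ring
    rw [le_div_iff₀ hD]
    linarith
  · -- upper bound eventually
    filter_upwards [self_mem_nhdsWithin] with r hr
    simp only [Set.mem_Ioi] at hr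
    have hD : (0:ℝ) < 1 / 2 * π ^ 2 * r ^ 4 := by positivity
    have hJint : IntervalIntegrable (fun u : ℝ => S (u / 2) r * (2 * π * u)) volume 0 (2 * r) :=
      ((S_cont r).mul (by fun_prop)).intervalIntegrable _ _
    have hIint : IntervalIntegrable
        (fun u : ℝ => S (u / 2) r * (2 * π * u * Real.exp (-π * u ^ 2))) volume 0 (2 * r) :=
      ((S_cont r).mul (by fun_prop)).intervalIntegrable _ _
    have hle : (∫ u in (0:ℝ)..(2 * r), S (u / 2) r * (2 * π * u * Real.exp (-π * u ^ 2)))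
        ≤ 1 / 2 * π ^ 2 * r ^ 4 := by
      rw [← J_eq hr]
      apply intervalIntegral.integral_mono_on (by positivity) hIint hJint
      intro u hu
      obtain ⟨hu0, hu2⟩ := hu
      have hS : 0 ≤ S (u / 2) r := S_nonneg hr hu0 hu2
      have hexp : Real.exp (-π * u ^ 2) ≤ 1 := by
        apply Real.exp_le_one_iff.2
        nlinarith [Real.pi_pos]
      nlinarith [mul_nonneg hS (by positivity : (0:ℝ) ≤ 2 * π * u)]
    rw [div_le_one hD]
    linarith
end

section
/- For every a > 0 and every α with 2 < α < 4, 2π·∫₀^∞ (1 − e^{−aπr²})·r^{1−α} dr = π^{α/2}·a^{α/2−1}·|Γ(1 − α/2)|. -/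
open MeasureTheory Real

lemma aux_meas (s : ℝ) : AEStronglyMeasurable (fun u : ℝ => (1 - Real.exp (-u)) * u ^ (-s - 1))
    (volume.restrict (Set.Ioi (0:ℝ))) := by
  refine ContinuousOn.aestronglyMeasurable ?_ measurableSet_Ioi
  exact (continuousOn_const.sub (Real.continuous_exp.comp continuous_neg).continuousOn).mul
    (continuousOn_id.rpow_const (fun x hx => Or.inl (ne_of_gt hx)))

lemma integrable_one_sub_exp (s : ℝ) (h0 : 0 < s) (h1 : s < 1) :
    IntegrableOn (fun u : ℝ => (1 - Real.exp (-u)) * u ^ (-s - 1)) (Set.Ioi 0) := by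
  have hmeas := aux_meas s
  rw [← Set.Ioc_union_Ioi_eq_Ioi (zero_le_one), integrableOn_union]
  constructor
  · have hint : IntegrableOn (fun u : ℝ => u ^ (-s)) (Set.Ioc (0:ℝ) 1) := by
      exact (intervalIntegral.intervalIntegrable_rpow' (a := 0) (b := 1)
        (by linarith : (-1:ℝ) < -s)).1
    refine Integrable.mono' hint (hmeas.mono_set Set.Ioc_subset_Ioi_self) ?_
    filter_upwards [ae_restrict_mem measurableSet_Ioc] with u hu
    have hu0 : (0:ℝ) < u := hu.1
    have h1e : 0 ≤ 1 - Real.exp (-u) := by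
      simp only [sub_nonneg]
      exact Real.exp_le_one_iff.mpr (by linarith)
    have h2e : 1 - Real.exp (-u) ≤ u := by
      have := Real.add_one_le_exp (-u); linarith
    rw [Real.norm_of_nonneg (mul_nonneg h1e (Real.rpow_nonneg hu0.le _))]
    calc (1 - Real.exp (-u)) * u ^ (-s - 1) ≤ u * u ^ (-s - 1) :=
          mul_le_mul_of_nonneg_right h2e (Real.rpow_nonneg hu0.le _)
      _ = u ^ (-s) := by
          have h := Real.rpow_add hu0 1 (-s - 1)
          rw [Real.rpow_one] at h
          rw [← h]
          norm_num
  · refine Integrable.mono' (integrableOn_Ioi_rpow_of_lt (by linarith : -s - 1 < -1) zero_lt_one)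
      (hmeas.mono_set (Set.Ioi_subset_Ioi zero_le_one)) ?_
    filter_upwards [ae_restrict_mem measurableSet_Ioi] with u hu
    have hu0 : (0:ℝ) < u := lt_trans zero_lt_one hu
    have h1e : 0 ≤ 1 - Real.exp (-u) := by
      simp only [sub_nonneg]
      exact Real.exp_le_one_iff.mpr (by linarith)
    have h2e : 1 - Real.exp (-u) ≤ 1 := by
      have := Real.exp_pos (-u); linarith
    rw [Real.norm_of_nonneg (mul_nonneg h1e (Real.rpow_nonneg hu0.le _))]
    nth_rewrite 2 [← one_mul (u ^ (-s-1))]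
    exact mul_le_mul_of_nonneg_right h2e (Real.rpow_nonneg hu0.le _)

lemma gamma_tail (s : ℝ) (h0 : 0 < s) (h1 : s < 1) :
    ∫ u in Set.Ioi (0:ℝ), (1 - Real.exp (-u)) * u ^ (-s - 1) = Real.Gamma (1 - s) / s := by
  set F : ℝ → ℝ := fun u => -((1 - Real.exp (-u)) * u ^ (-s)) / s with hF
  set F' : ℝ → ℝ := fun u =>
    (1 - Real.exp (-u)) * u ^ (-s - 1) - Real.exp (-u) * u ^ (-s) / s with hF'
  have hs : s ≠ 0 := ne_of_gt h0
  -- Gamma integrand integrability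
  have hg : IntegrableOn (fun u : ℝ => Real.exp (-u) * u ^ (-s)) (Set.Ioi 0) := by
    have := Real.GammaIntegral_convergent (s := 1 - s) (by linarith)
    simpa using this
  have hL := integrable_one_sub_exp s h0 h1
  have hF'int : IntegrableOn F' (Set.Ioi 0) := hL.sub (hg.div_const s)
  -- derivative
  have hderiv : ∀ u ∈ Set.Ioi (0:ℝ), HasDerivAt F (F' u) u := by
    intro u hu
    have hu0 : (0:ℝ) < u := hu
    have h1d : HasDerivAt (fun u : ℝ => 1 - Real.exp (-u)) (Real.exp (-u)) u := by
      have := ((Real.hasDerivAt_exp (-u)).comp u (hasDerivAt_neg u)).const_sub 1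
      simpa using this
    have h2d : HasDerivAt (fun u : ℝ => u ^ (-s)) (-s * u ^ (-s - 1)) u :=
      Real.hasDerivAt_rpow_const (Or.inl hu0.ne')
    have := ((h1d.mul h2d).neg).div_const s
    convert this using 1
    · rfl
    · rfl
    · rfl
    simp only [hF']
    field_simp
    ring
  -- limit at infinity
  have htop : Filter.Tendsto F Filter.atTop (nhds 0) := by
    apply squeeze_zero_norm' (a := fun u => u ^ (-s) / s)
    · filter_upwards [Filter.eventually_ge_atTop (1:ℝ)] with u hu
      have hu0 : (0:ℝ) < u := lt_of_lt_of_le zero_lt_one hu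
      have h1e : 0 ≤ 1 - Real.exp (-u) := by
        simp only [sub_nonneg]; exact Real.exp_le_one_iff.mpr (by linarith)
      have h2e : 1 - Real.exp (-u) ≤ 1 := by have := Real.exp_pos (-u); linarith
      have hrp := Real.rpow_nonneg hu0.le (-s)
      simp only [hF, norm_div, norm_neg, Real.norm_of_nonneg (mul_nonneg h1e hrp),
        Real.norm_of_nonneg h0.le]
      apply div_le_div_of_nonneg_right ?_ h0.le |>.trans_eq rfl
      · nth_rewrite 2 [← one_mul (u ^ (-s))]
        exact mul_le_mul_of_nonneg_right h2e hrp
    · simpa using (tendsto_rpow_neg_atTop h0).div_const s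
  -- continuity at 0
  have hcont : ContinuousWithinAt F (Set.Ici 0) 0 := by
    have hF0 : F 0 = 0 := by simp [hF]
    rw [ContinuousWithinAt, hF0]
    apply squeeze_zero_norm' (a := fun u => u ^ (1 - s) / s)
    · filter_upwards [self_mem_nhdsWithin] with u hu
      rcases eq_or_lt_of_le (Set.mem_Ici.mp hu : (0:ℝ) ≤ u) with h | hu0
      · simp [hF, ← h, Real.zero_rpow (by linarith : 1 - s ≠ 0), hs,
          Real.zero_rpow (by intro hc; apply hs; linarith [neg_eq_zero.mp hc] : -s ≠ 0)]
      · have h1e : 0 ≤ 1 - Real.exp (-u) := by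
          simp only [sub_nonneg]; exact Real.exp_le_one_iff.mpr (by linarith)
        have h2e : 1 - Real.exp (-u) ≤ u := by
          have := Real.add_one_le_exp (-u); linarith
        have hrp := Real.rpow_nonneg hu0.le (-s)
        simp only [hF, norm_div, norm_neg, Real.norm_of_nonneg (mul_nonneg h1e hrp),
          Real.norm_of_nonneg h0.le]
        apply div_le_div_of_nonneg_right ?_ h0.le
        · have h := Real.rpow_add hu0 1 (-s)
          rw [Real.rpow_one] at h
          calc (1 - Real.exp (-u)) * u ^ (-s) ≤ u * u ^ (-s) :=
                mul_le_mul_of_nonneg_right h2e hrp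
            _ = u ^ (1 - s) := by rw [← h]; ring_nf
    · have : ContinuousAt (fun u : ℝ => u ^ (1 - s)) 0 :=
        Real.continuousAt_rpow_const 0 (1 - s) (Or.inr (by linarith))
      have h2 := (this.tendsto.mono_left (nhdsWithin_le_nhds (s := Set.Ici (0:ℝ)))).div_const s
      simpa [Real.zero_rpow (by linarith : (1:ℝ) - s ≠ 0)] using h2
  have key := integral_Ioi_of_hasDerivAt_of_tendsto hcont hderiv hF'int htop
  have hF0 : F 0 = 0 := by simp [hF]
  rw [hF0, sub_zero] at key
  -- Gamma value
  have hGamma : ∫ u in Set.Ioi (0:ℝ), Real.exp (-u) * u ^ (-s) = Real.Gamma (1 - s) := by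
    rw [Real.Gamma_eq_integral (by linarith : (0:ℝ) < 1 - s)]
    refine setIntegral_congr_fun measurableSet_Ioi (fun u hu => ?_)
    norm_num
  have split : ∀ u : ℝ, (1 - Real.exp (-u)) * u ^ (-s - 1)
      = F' u + Real.exp (-u) * u ^ (-s) / s := by
    intro u; simp only [hF']; ring
  calc ∫ u in Set.Ioi (0:ℝ), (1 - Real.exp (-u)) * u ^ (-s - 1)
      = ∫ u in Set.Ioi (0:ℝ), (F' u + Real.exp (-u) * u ^ (-s) / s) := by
        simp_rw [split]
    _ = (∫ u in Set.Ioi (0:ℝ), F' u) + ∫ u in Set.Ioi (0:ℝ), Real.exp (-u) * u ^ (-s) / s :=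
        integral_add hF'int (hg.div_const s)
    _ = Real.Gamma (1 - s) / s := by
        rw [key, integral_div, hGamma, zero_add]

/-- For `a > 0` and `2 < α < 4`,
`2π·∫₀^∞ (1 − e^(−aπr²))·r^(1−α) dr = π^(α/2)·a^(α/2−1)·|Γ(1 − α/2)|`. -/
theorem stmt_10 (a α : ℝ) (ha : 0 < a) (hα1 : 2 < α) (hα2 : α < 4) :
    2 * π * (∫ r in Set.Ioi (0 : ℝ), (1 - Real.exp (-a * π * r ^ 2)) * r ^ (1 - α))
      = π ^ (α / 2) * a ^ (α / 2 - 1) * |Real.Gamma (1 - α / 2)| := by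
  have hπ : (0:ℝ) < π := Real.pi_pos
  set c : ℝ := a * π with hc
  have hc0 : 0 < c := mul_pos ha hπ
  set g : ℝ → ℝ := fun t => (1 - Real.exp (-(c * t))) * t ^ (-α / 2) / 2 with hg
  set h : ℝ → ℝ := fun u => (1 - Real.exp (-u)) * u ^ (-α / 2) with hh
  -- Step A : substitution r ↦ r²
  have stepA : (∫ r in Set.Ioi (0 : ℝ), (1 - Real.exp (-a * π * r ^ 2)) * r ^ (1 - α))
      = ∫ t in Set.Ioi (0:ℝ), g t := by
    rw [← integral_comp_rpow_Ioi_of_pos (g := g) (p := 2) two_pos]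
    refine setIntegral_congr_fun measurableSet_Ioi (fun x hx => ?_)
    have hx0 : (0:ℝ) < x := hx
    have hxp : x ^ ((2:ℝ)) = x ^ (2:ℕ) := by
      rw [← Real.rpow_natCast x 2]; norm_num
    have hpow : (x ^ (2:ℕ) : ℝ) ^ (-α / 2) = x ^ (-α) := by
      rw [← Real.rpow_natCast x 2, ← Real.rpow_mul hx0.le]
      push_cast
      rw [show (2:ℝ) * (-α / 2) = -α by ring]
    have hxa : x * x ^ (-α) = x ^ (1 - α) := by
      have h := Real.rpow_add hx0 1 (-α)
      rw [Real.rpow_one] at h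
      rw [← h]; ring_nf
    simp only [hg, smul_eq_mul, hxp, hpow]
    rw [show ((2:ℝ) - 1) = 1 by norm_num, Real.rpow_one]
    rw [show -(c * x ^ (2:ℕ)) = -a * π * x ^ (2:ℕ) by rw [hc]; ring]
    field_simp
    rw [← hxa]; ring
  -- Step B : scaling t ↦ t / c
  have stepB : (∫ t in Set.Ioi (0:ℝ), g t)
      = (1/2) * (c ^ (α/2 - 1) * ∫ u in Set.Ioi (0:ℝ), h u) := by
    have key := integral_comp_mul_left_Ioi h 0 hc0
    rw [mul_zero] at key
    have hcongr : (∫ x in Set.Ioi (0:ℝ), h (c * x))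
        = c ^ (-α/2) * ∫ x in Set.Ioi (0:ℝ), (1 - Real.exp (-(c * x))) * x ^ (-α/2) := by
      rw [← integral_const_mul]
      refine setIntegral_congr_fun measurableSet_Ioi (fun x hx => ?_)
      have hx0 : (0:ℝ) < x := hx
      simp only [hh]
      rw [Real.mul_rpow hc0.le hx0.le]
      ring
    rw [hcongr] at key
    -- key : c^(-α/2) * ∫ (1-exp(-(c x))) x^(-α/2) = c⁻¹ • ∫ h
    have h2 : (∫ x in Set.Ioi (0:ℝ), (1 - Real.exp (-(c * x))) * x ^ (-α/2))
        = c ^ (α/2) * (c⁻¹ * ∫ u in Set.Ioi (0:ℝ), h u) := by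
      have hcc : c ^ (-α/2) ≠ 0 := (Real.rpow_pos_of_pos hc0 _).ne'
      have hinv : c ^ (α/2) * c ^ (-α/2) = 1 := by
        rw [← Real.rpow_add hc0, show α/2 + -α/2 = (0:ℝ) by ring, Real.rpow_zero]
      rw [smul_eq_mul] at key
      calc (∫ x in Set.Ioi (0:ℝ), (1 - Real.exp (-(c * x))) * x ^ (-α/2))
          = c ^ (α/2) * (c ^ (-α/2) * ∫ x in Set.Ioi (0:ℝ),
              (1 - Real.exp (-(c * x))) * x ^ (-α/2)) := by
            rw [← mul_assoc, hinv, one_mul]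
        _ = c ^ (α/2) * (c⁻¹ * ∫ u in Set.Ioi (0:ℝ), h u) := by rw [key]
    have h3 : (∫ t in Set.Ioi (0:ℝ), g t)
        = (1/2) * ∫ x in Set.Ioi (0:ℝ), (1 - Real.exp (-(c * x))) * x ^ (-α/2) := by
      rw [← integral_const_mul]
      refine setIntegral_congr_fun measurableSet_Ioi (fun x _ => ?_)
      simp only [hg]; ring
    rw [h3, h2]
    have hcm : c ^ (α/2) * c⁻¹ = c ^ (α/2 - 1) := by
      rw [← Real.rpow_neg_one c, ← Real.rpow_add hc0]; ring_nf
    rw [← mul_assoc (c ^ (α/2)), hcm]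
  -- Step C : Gamma evaluation
  have hs0 : 0 < α/2 - 1 := by linarith
  have hs1 : α/2 - 1 < 1 := by linarith
  have stepC : (∫ u in Set.Ioi (0:ℝ), h u) = Real.Gamma (2 - α/2) / (α/2 - 1) := by
    have := gamma_tail (α/2 - 1) hs0 hs1
    rw [show -(α/2 - 1) - 1 = -α/2 by ring, show (1:ℝ) - (α/2 - 1) = 2 - α/2 by ring] at this
    simpa [hh] using this
  -- Gamma identities
  have hne : (1:ℝ) - α/2 ≠ 0 := by intro hcon; rw [sub_eq_zero] at hcon; linarith [hcon]
  have hGadd : Real.Gamma (2 - α/2) = (1 - α/2) * Real.Gamma (1 - α/2) := by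
    have := Real.Gamma_add_one hne
    rw [show (1:ℝ) - α/2 + 1 = 2 - α/2 by ring] at this
    exact this
  have hGpos : 0 < Real.Gamma (2 - α/2) := Real.Gamma_pos_of_pos (by linarith)
  have hGneg : Real.Gamma (1 - α/2) < 0 := by
    rcases lt_trichotomy (Real.Gamma (1 - α/2)) 0 with h | h | h
    · exact h
    · rw [hGadd, h, mul_zero] at hGpos; linarith
    · nlinarith [hGadd]
  have habs : |Real.Gamma (1 - α/2)| = -Real.Gamma (1 - α/2) := abs_of_neg hGneg
  -- Put everything together
  rw [stepA, stepB, stepC, hGadd, habs]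
  have hcr : c ^ (α/2 - 1) = a ^ (α/2 - 1) * π ^ (α/2 - 1) :=
    Real.mul_rpow ha.le hπ.le
  have hπr : π * π ^ (α/2 - 1) = π ^ (α/2) := by
    nth_rewrite 1 [← Real.rpow_one π]
    rw [← Real.rpow_add hπ]; ring_nf
  have hsne : α/2 - 1 ≠ 0 := ne_of_gt hs0
  have hq : (1 - α/2) * Real.Gamma (1 - α/2) / (α/2 - 1) = -Real.Gamma (1 - α/2) := by
    rw [div_eq_iff hsne]
    ring
  rw [hcr, hq]
  linear_combination (a ^ (α / 2 - 1) * (-Real.Gamma (1 - α/2))) * hπr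
end
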